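/- Let 0 < r < 2 and let (a_i)_{i ∈ I} be a countable family of reals with Σ_{i ∈ I} a_i² < ∞. Then sup_{0 < λ ≤ 1} λ^{r−2} Σ_{i ∈ I} a_i² 1{|a_i| ≤ λ} < ∞ if and only if sup_{0 < λ ≤ 1} λ^r Σ_{i ∈ I} 1{|a_i| > λ} < ∞. -/

import Mathlib

open Set

open scoped ENNReal

noncomputable section

attribute [local instance] Classical.propDecidable

lemma real_calc_fwd (r lam : ℝ) (hl : 0 < lam) (k : ℕ) :
    ((2 ^ k * lam) ^ 2)⁻¹ * (2 ^ (k + 1) * lam) ^ (2 - r)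
      = 2 ^ (2 - r) * lam ^ (-r) * (2 ^ (-r)) ^ k := by
  induction k with
  | zero =>
      have h1 : ((2:ℝ) ^ (0+1) * lam) ^ (2 - r) = 2 ^ (2-r) * lam ^ (2-r) := by
        rw [pow_one, Real.mul_rpow (by norm_num) hl.le]
      have h2 : lam ^ (2 - r) = lam ^ 2 * lam ^ (-r) := by
        rw [show (2:ℝ) - r = 2 + (-r) by ring, Real.rpow_add hl, Real.rpow_two]
      rw [h1, h2]
      field_simp
  | succ n ih =>
      have hstep : ((2:ℝ) ^ (n+1+1) * lam) ^ (2-r) = 2 ^ (2-r) * ((2 ^ (n+1) * lam) ^ (2-r)) := by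
        rw [show (2:ℝ) ^ (n+1+1) * lam = 2 * (2 ^ (n+1) * lam) by ring,
          Real.mul_rpow (by norm_num) (by positivity)]
      have h4 : ((2:ℝ) ^ (n+1) * lam) ^ 2 = 4 * ((2 ^ n * lam) ^ 2) := by ring
      have hkey : (2:ℝ) ^ (2 - r) = 4 * 2 ^ (-r) := by
        rw [show (2:ℝ) - r = 2 + (-r) by ring, Real.rpow_add (by norm_num), Real.rpow_two]
        norm_num
      rw [hstep, h4, hkey]
      rw [hkey] at ih
      have hX : ((2:ℝ) ^ n * lam) ^ 2 ≠ 0 := by positivity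
      field_simp at ih ⊢
      linear_combination ih

lemma exists_shell_up {lam x : ℝ} (hlam : 0 < lam) (hx : lam < x) :
    ∃ k : ℕ, 2 ^ k * lam < x ∧ x ≤ 2 ^ (k + 1) * lam := by
  have hex : ∃ k : ℕ, x ≤ 2 ^ (k + 1) * lam := by
    obtain ⟨n, hn⟩ := pow_unbounded_of_one_lt (x / lam) (one_lt_two (α := ℝ))
    refine ⟨n, ?_⟩
    have h2 : x / lam < 2 ^ (n + 1) :=
      lt_of_lt_of_le hn (pow_le_pow_right₀ one_le_two (Nat.le_succ n))
    calc x = x / lam * lam := by field_simp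
    _ ≤ 2 ^ (n + 1) * lam := by nlinarith [h2, hlam]
  classical
  refine ⟨Nat.find hex, ?_, Nat.find_spec hex⟩
  rcases Nat.eq_zero_or_pos (Nat.find hex) with hk | hk
  · simpa [hk] using hx
  · have := Nat.find_min hex (m := Nat.find hex - 1) (by omega)
    push_neg at this
    have hkk : Nat.find hex - 1 + 1 = Nat.find hex := by omega
    rwa [hkk] at this

lemma forward_pointwise (r : ℝ) (hr0 : 0 < r) (hr2 : r < 2) {I : Type} (a : I → ℝ)
    (hsum : Summable fun i => (a i) ^ 2) (C : ℝ≥0∞)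
    (hS : ∀ μ ∈ Set.Ioc (0:ℝ) 1,
      (∑' i : I, (if |a i| ≤ μ then ENNReal.ofReal ((a i) ^ 2) else 0))
        ≤ ENNReal.ofReal (μ ^ (2 - r)) * C)
    {lam : ℝ} (hl0 : 0 < lam) (hl1 : lam ≤ 1) :
    ENNReal.ofReal (lam ^ r) * (∑' i : I, (if lam < |a i| then (1:ℝ≥0∞) else 0))
      ≤ ENNReal.ofReal (∑' i : I, (a i) ^ 2)
        + ENNReal.ofReal ((2:ℝ) ^ (2 - r)) * C * (1 - ENNReal.ofReal ((2:ℝ) ^ (-r)))⁻¹ := by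
  classical
  set T : ℝ≥0∞ := ENNReal.ofReal (∑' i : I, (a i) ^ 2) with hTdef
  have hT : (∑' i : I, ENNReal.ofReal ((a i) ^ 2)) = T :=
    (ENNReal.ofReal_tsum_of_nonneg (fun i => sq_nonneg _) hsum).symm
  set q : ℝ≥0∞ := ENNReal.ofReal ((2:ℝ) ^ (-r)) with hqdef
  set A : ℝ≥0∞ := ENNReal.ofReal ((2:ℝ) ^ (2 - r)) with hAdef
  set L : ℝ≥0∞ := ENNReal.ofReal (lam ^ (-r)) with hLdef
  -- shell counting functions
  set f : ℕ → I → ℝ≥0∞ := fun k i =>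
    if 2 ^ k * lam < |a i| ∧ |a i| ≤ min (2 ^ (k + 1) * lam) 1 then 1 else 0 with hfdef
  -- Step A : split N into big part and middle part
  have stepA : (∑' i : I, (if lam < |a i| then (1:ℝ≥0∞) else 0))
      ≤ T + ∑' i : I, (if lam < |a i| ∧ |a i| ≤ 1 then (1:ℝ≥0∞) else 0) := by
    rw [← hT, ← ENNReal.tsum_add]
    refine ENNReal.tsum_le_tsum fun i => ?_
    by_cases h1 : lam < |a i|
    · by_cases h2 : |a i| ≤ 1
      · simp [h1, h2]
      · have : (1:ℝ≥0∞) ≤ ENNReal.ofReal ((a i) ^ 2) := by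
          rw [ENNReal.one_le_ofReal]
          nlinarith [sq_abs (a i), not_le.mp h2]
        simp only [if_pos h1]
        exact le_trans this (le_self_add)
    · simp [h1]
  -- Step B : middle part is dominated by the shell sums
  have stepB : (∑' i : I, (if lam < |a i| ∧ |a i| ≤ 1 then (1:ℝ≥0∞) else 0))
      ≤ ∑' k : ℕ, ∑' i : I, f k i := by
    rw [ENNReal.tsum_comm]
    refine ENNReal.tsum_le_tsum fun i => ?_
    by_cases h : lam < |a i| ∧ |a i| ≤ 1
    · obtain ⟨k, hk1, hk2⟩ := exists_shell_up hl0 h.1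
      have hfk : f k i = 1 := if_pos ⟨hk1, le_min hk2 h.2⟩
      calc (if lam < |a i| ∧ |a i| ≤ 1 then (1:ℝ≥0∞) else 0) = f k i := by
            rw [if_pos h, hfk]
      _ ≤ ∑' k : ℕ, f k i := ENNReal.le_tsum k
    · simp [h]
  -- Step C+D+E : each shell sum is bounded
  have stepC : ∀ k : ℕ, (∑' i : I, f k i) ≤ (A * L * C) * q ^ k := by
    intro k
    set μ : ℝ := min (2 ^ (k + 1) * lam) 1 with hμdef
    have hμ0 : 0 < μ := lt_min (by positivity) one_pos
    have hμ1 : μ ≤ 1 := min_le_right _ _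
    set c : ℝ := (((2:ℝ) ^ k * lam) ^ 2)⁻¹ with hcdef
    have hc0 : 0 ≤ c := by positivity
    have h1 : (∑' i : I, f k i)
        ≤ ENNReal.ofReal c * ∑' i : I, (if |a i| ≤ μ then ENNReal.ofReal ((a i) ^ 2) else 0) := by
      rw [← ENNReal.tsum_mul_left]
      refine ENNReal.tsum_le_tsum fun i => ?_
      by_cases h : 2 ^ k * lam < |a i| ∧ |a i| ≤ μ
      · have hfk : f k i = 1 := if_pos h
        rw [hfk, if_pos h.2, ← ENNReal.ofReal_mul hc0, ENNReal.one_le_ofReal]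
        have hgt : ((2:ℝ) ^ k * lam) ^ 2 < (a i) ^ 2 := by
          nlinarith [sq_abs (a i), h.1, mul_pos (pow_pos (two_pos (α := ℝ)) k) hl0]
        rw [hcdef, inv_mul_eq_div, le_div_iff₀ (by positivity), one_mul]
        exact hgt.le
      · have hfk : f k i = 0 := if_neg h
        rw [hfk]; exact zero_le
    have h2 : (∑' i : I, (if |a i| ≤ μ then ENNReal.ofReal ((a i) ^ 2) else 0))
        ≤ ENNReal.ofReal ((2 ^ (k+1) * lam) ^ (2 - r)) * C := by
      refine le_trans (hS μ ⟨hμ0, hμ1⟩) (mul_le_mul_left (ENNReal.ofReal_le_ofReal ?_) C)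
      exact Real.rpow_le_rpow hμ0.le (min_le_left _ _) (by linarith)
    calc (∑' i : I, f k i) ≤ ENNReal.ofReal c * (ENNReal.ofReal ((2 ^ (k+1) * lam) ^ (2 - r)) * C) :=
          le_trans h1 (mul_le_mul_right h2 _)
    _ = ENNReal.ofReal (c * (2 ^ (k+1) * lam) ^ (2 - r)) * C := by
          rw [ENNReal.ofReal_mul hc0, mul_assoc]
    _ = (A * L * C) * q ^ k := by
          rw [hcdef, real_calc_fwd r lam hl0 k, hAdef, hLdef, hqdef,
            ENNReal.ofReal_mul (by positivity), ENNReal.ofReal_mul (by positivity),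
            ENNReal.ofReal_pow (by positivity)]
          ring
  -- combine
  have hgeom : (∑' k : ℕ, (A * L * C) * q ^ k) = (A * L * C) * (1 - q)⁻¹ := by
    rw [ENNReal.tsum_mul_left, ENNReal.tsum_geometric]
  have hN : (∑' i : I, (if lam < |a i| then (1:ℝ≥0∞) else 0))
      ≤ T + (A * L * C) * (1 - q)⁻¹ := by
    refine le_trans stepA (add_le_add_right ?_ T)
    refine le_trans stepB ?_
    rw [← hgeom]
    exact ENNReal.tsum_le_tsum stepC
  have hle1 : ENNReal.ofReal (lam ^ r) ≤ 1 :=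
    ENNReal.ofReal_le_one.2 (Real.rpow_le_one hl0.le hl1 hr0.le)
  have hone : ENNReal.ofReal (lam ^ r) * L = 1 := by
    rw [hLdef, ← ENNReal.ofReal_mul (by positivity), ← Real.rpow_add hl0]
    simp
  calc ENNReal.ofReal (lam ^ r) * (∑' i : I, (if lam < |a i| then (1:ℝ≥0∞) else 0))
      ≤ ENNReal.ofReal (lam ^ r) * (T + (A * L * C) * (1 - q)⁻¹) := mul_le_mul_right hN _
  _ = ENNReal.ofReal (lam ^ r) * T
      + (ENNReal.ofReal (lam ^ r) * L) * (A * C * (1 - q)⁻¹) := by ring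
  _ = ENNReal.ofReal (lam ^ r) * T + A * C * (1 - q)⁻¹ := by rw [hone, one_mul]
  _ ≤ T + A * C * (1 - q)⁻¹ :=
      add_le_add_left (le_trans (mul_le_mul_left hle1 T) (le_of_eq (one_mul T))) _

lemma two_inv_rpow_neg' (r : ℝ) : ((2:ℝ)⁻¹) ^ (-r) = (2:ℝ) ^ r := by
  rw [Real.inv_rpow (by norm_num), Real.rpow_neg (by norm_num), inv_inv]

lemma exists_shell_down {lam x : ℝ} (hx0 : 0 < x) (hx : x ≤ lam) :
    ∃ k : ℕ, lam / 2 ^ (k + 1) < x ∧ x ≤ lam / 2 ^ k := by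
  have hlam : 0 < lam := lt_of_lt_of_le hx0 hx
  have hex : ∃ k : ℕ, lam / 2 ^ (k + 1) < x := by
    obtain ⟨n, hn⟩ := pow_unbounded_of_one_lt (lam / x) (one_lt_two (α := ℝ))
    refine ⟨n, ?_⟩
    have h2 : (0:ℝ) < 2 ^ (n+1) := by positivity
    have h3 : lam / x < 2 ^ (n + 1) :=
      lt_of_lt_of_le hn (pow_le_pow_right₀ one_le_two (Nat.le_succ n))
    rw [div_lt_iff₀ h2]
    rw [div_lt_iff₀ hx0] at h3
    nlinarith
  classical
  refine ⟨Nat.find hex, Nat.find_spec hex, ?_⟩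
  rcases Nat.eq_zero_or_pos (Nat.find hex) with hk | hk
  · simpa [hk] using hx
  · have := Nat.find_min hex (m := Nat.find hex - 1) (by omega)
    push_neg at this
    have hkk : Nat.find hex - 1 + 1 = Nat.find hex := by omega
    rwa [hkk] at this

lemma real_calc_bwd (r lam : ℝ) (hl : 0 < lam) (k : ℕ) :
    (lam / 2 ^ k) ^ 2 * (lam / 2 ^ (k + 1)) ^ (-r)
      = 2 ^ r * lam ^ (2 - r) * (2 ^ (r - 2)) ^ k := by
  induction k with
  | zero =>
      have h1 : (lam / (2:ℝ) ^ (0+1)) ^ (-r) = lam ^ (-r) * (2:ℝ) ^ r := by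
        rw [pow_one, div_eq_mul_inv, Real.mul_rpow hl.le (by norm_num), two_inv_rpow_neg']
      have h2 : lam ^ 2 * lam ^ (-r) = lam ^ (2 - r) := by
        rw [show (2:ℝ) - r = 2 + (-r) by ring, Real.rpow_add hl, Real.rpow_two]
      rw [h1]
      linear_combination (2:ℝ)^r * h2
  | succ n ih =>
      have hstep : (lam / (2:ℝ) ^ (n+1+1)) ^ (-r) = 2 ^ r * ((lam / 2 ^ (n+1)) ^ (-r)) := by
        rw [show lam / (2:ℝ) ^ (n+1+1) = (lam / 2 ^ (n+1)) * 2⁻¹ by ring,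
          Real.mul_rpow (by positivity) (by norm_num), two_inv_rpow_neg']
        ring
      have h4 : (lam / (2:ℝ) ^ (n+1)) ^ 2 = 4⁻¹ * ((lam / 2 ^ n) ^ 2) := by ring
      have hkey : (2:ℝ) ^ (r-2) = 4⁻¹ * 2 ^ r := by
        rw [show (r:ℝ) - 2 = r + (-2) by ring, Real.rpow_add (by norm_num),
          show ((2:ℝ))^(-2:ℝ) = 4⁻¹ by
            rw [Real.rpow_neg (by norm_num), show ((2:ℝ))^(2:ℝ) = 4 by
              rw [Real.rpow_two]; norm_num]]
        ring
      rw [hstep, h4, pow_succ]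
      linear_combination 4⁻¹ * (2:ℝ)^r * ih - (2:ℝ)^r * lam^(2-r) * ((2:ℝ)^(r-2))^n * hkey

lemma backward_pointwise (r : ℝ) (hr0 : 0 < r) (hr2 : r < 2) {I : Type} (a : I → ℝ)
    (C : ℝ≥0∞)
    (hN : ∀ μ ∈ Set.Ioc (0:ℝ) 1,
      (∑' i : I, (if μ < |a i| then (1:ℝ≥0∞) else 0)) ≤ ENNReal.ofReal (μ ^ (-r)) * C)
    {lam : ℝ} (hl0 : 0 < lam) (hl1 : lam ≤ 1) :
    ENNReal.ofReal (lam ^ (r - 2)) * (∑' i : I, (if |a i| ≤ lam then ENNReal.ofReal ((a i) ^ 2) else 0))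
      ≤ ENNReal.ofReal ((2:ℝ) ^ r) * C * (1 - ENNReal.ofReal ((2:ℝ) ^ (r - 2)))⁻¹ := by
  classical
  set q : ℝ≥0∞ := ENNReal.ofReal ((2:ℝ) ^ (r - 2)) with hqdef
  set A : ℝ≥0∞ := ENNReal.ofReal ((2:ℝ) ^ r) with hAdef
  set L : ℝ≥0∞ := ENNReal.ofReal (lam ^ (2 - r)) with hLdef
  set g : ℕ → I → ℝ≥0∞ := fun k i =>
    if lam / 2 ^ (k + 1) < |a i| ∧ |a i| ≤ lam / 2 ^ k then ENNReal.ofReal ((a i) ^ 2) else 0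
    with hgdef
  have stepB : (∑' i : I, (if |a i| ≤ lam then ENNReal.ofReal ((a i) ^ 2) else 0))
      ≤ ∑' k : ℕ, ∑' i : I, g k i := by
    rw [ENNReal.tsum_comm]
    refine ENNReal.tsum_le_tsum fun i => ?_
    by_cases h : |a i| ≤ lam
    · by_cases h0 : a i = 0
      · simp [h0]
      · obtain ⟨k, hk1, hk2⟩ := exists_shell_down (abs_pos.2 h0) h
        have hgk : g k i = ENNReal.ofReal ((a i) ^ 2) := if_pos ⟨hk1, hk2⟩
        calc (if |a i| ≤ lam then ENNReal.ofReal ((a i) ^ 2) else 0) = g k i := by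
              rw [if_pos h, hgk]
        _ ≤ ∑' k : ℕ, g k i := ENNReal.le_tsum k
    · simp [h]
  have stepC : ∀ k : ℕ, (∑' i : I, g k i) ≤ (A * L * C) * q ^ k := by
    intro k
    set μ : ℝ := lam / 2 ^ (k + 1) with hμdef
    have hμ0 : 0 < μ := by positivity
    have hμ1 : μ ≤ 1 := le_trans (div_le_self hl0.le (one_le_pow₀ one_le_two)) hl1
    set c : ℝ := (lam / 2 ^ k) ^ 2 with hcdef
    have hc0 : 0 ≤ c := by positivity
    have h1 : (∑' i : I, g k i)
        ≤ ENNReal.ofReal c * ∑' i : I, (if μ < |a i| then (1:ℝ≥0∞) else 0) := by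
      rw [← ENNReal.tsum_mul_left]
      refine ENNReal.tsum_le_tsum fun i => ?_
      by_cases h : lam / 2 ^ (k + 1) < |a i| ∧ |a i| ≤ lam / 2 ^ k
      · have hgk : g k i = ENNReal.ofReal ((a i) ^ 2) := if_pos h
        rw [hgk, if_pos (show μ < |a i| from h.1), mul_one]
        refine ENNReal.ofReal_le_ofReal ?_
        calc (a i) ^ 2 = |a i| ^ 2 := (sq_abs _).symm
        _ ≤ (lam / 2 ^ k) ^ 2 := by
              have := h.2; nlinarith [abs_nonneg (a i)]
      · have hgk : g k i = 0 := if_neg h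
        rw [hgk]; exact zero_le
    calc (∑' i : I, g k i)
        ≤ ENNReal.ofReal c * (ENNReal.ofReal (μ ^ (-r)) * C) :=
          le_trans h1 (mul_le_mul_right (hN μ ⟨hμ0, hμ1⟩) _)
    _ = ENNReal.ofReal (c * μ ^ (-r)) * C := by
          rw [ENNReal.ofReal_mul hc0, mul_assoc]
    _ = (A * L * C) * q ^ k := by
          rw [hcdef, hμdef, real_calc_bwd r lam hl0 k, hAdef, hLdef, hqdef,
            ENNReal.ofReal_mul (by positivity), ENNReal.ofReal_mul (by positivity),
            ENNReal.ofReal_pow (by positivity)]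
          ring
  have hgeom : (∑' k : ℕ, (A * L * C) * q ^ k) = (A * L * C) * (1 - q)⁻¹ := by
    rw [ENNReal.tsum_mul_left, ENNReal.tsum_geometric]
  have hone : ENNReal.ofReal (lam ^ (r - 2)) * L = 1 := by
    rw [hLdef, ← ENNReal.ofReal_mul (by positivity), ← Real.rpow_add hl0]
    simp
  calc ENNReal.ofReal (lam ^ (r - 2)) * (∑' i : I, (if |a i| ≤ lam then ENNReal.ofReal ((a i) ^ 2) else 0))
      ≤ ENNReal.ofReal (lam ^ (r - 2)) * ((A * L * C) * (1 - q)⁻¹) := by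
        refine mul_le_mul_right (le_trans stepB ?_) _
        rw [← hgeom]
        exact ENNReal.tsum_le_tsum stepC
  _ = (ENNReal.ofReal (lam ^ (r - 2)) * L) * (A * C * (1 - q)⁻¹) := by ring
  _ = A * C * (1 - q)⁻¹ := by rw [hone, one_mul]


/-- equivalence of the two defining conditions of the local weak Besov
space `W_L(r)` for an arbitrary square-summable countable family of coefficients. -/
theorem weakL_conditions_equiv
    (r : ℝ) (hr0 : 0 < r) (hr2 : r < 2)
    (I : Type) [Countable I] (a : I → ℝ)
    (hsum : Summable fun i => (a i) ^ 2) :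
    ((⨆ lam ∈ Set.Ioc (0 : ℝ) 1, ENNReal.ofReal (lam ^ (r - 2)) *
        ∑' i : I, (if |a i| ≤ lam then ENNReal.ofReal ((a i) ^ 2) else 0)) < ⊤)
    ↔ ((⨆ lam ∈ Set.Ioc (0 : ℝ) 1, ENNReal.ofReal (lam ^ r) *
        ∑' i : I, (if lam < |a i| then (1 : ℝ≥0∞) else 0)) < ⊤) := by
  constructor
  · intro h
    set C : ℝ≥0∞ := ⨆ lam ∈ Set.Ioc (0 : ℝ) 1, ENNReal.ofReal (lam ^ (r - 2)) *
        ∑' i : I, (if |a i| ≤ lam then ENNReal.ofReal ((a i) ^ 2) else 0) with hCdef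
    have hCne : C ≠ ⊤ := h.ne
    have hS : ∀ μ ∈ Set.Ioc (0:ℝ) 1,
        (∑' i : I, (if |a i| ≤ μ then ENNReal.ofReal ((a i) ^ 2) else 0))
          ≤ ENNReal.ofReal (μ ^ (2 - r)) * C := by
      intro μ hμ
      have h1 : ENNReal.ofReal (μ ^ (r - 2)) *
          (∑' i : I, (if |a i| ≤ μ then ENNReal.ofReal ((a i) ^ 2) else 0)) ≤ C :=
        le_iSup₂ (f := fun lam (_ : lam ∈ Set.Ioc (0:ℝ) 1) => ENNReal.ofReal (lam ^ (r - 2)) *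
          ∑' i : I, (if |a i| ≤ lam then ENNReal.ofReal ((a i) ^ 2) else 0)) μ hμ
      have hone : ENNReal.ofReal (μ ^ (2 - r)) * ENNReal.ofReal (μ ^ (r - 2)) = 1 := by
        rw [← ENNReal.ofReal_mul (Real.rpow_nonneg hμ.1.le _), ← Real.rpow_add hμ.1,
          show (2 - r) + (r - 2) = 0 by ring, Real.rpow_zero, ENNReal.ofReal_one]
      calc (∑' i : I, (if |a i| ≤ μ then ENNReal.ofReal ((a i) ^ 2) else 0))
          = ENNReal.ofReal (μ ^ (2 - r)) * (ENNReal.ofReal (μ ^ (r - 2)) *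
            (∑' i : I, (if |a i| ≤ μ then ENNReal.ofReal ((a i) ^ 2) else 0))) := by
            rw [← mul_assoc, hone, one_mul]
      _ ≤ ENNReal.ofReal (μ ^ (2 - r)) * C := mul_le_mul_right h1 _
    refine lt_of_le_of_lt
      (iSup₂_le fun lam hlam => forward_pointwise r hr0 hr2 a hsum C hS hlam.1 hlam.2) ?_
    have hq1 : ENNReal.ofReal ((2:ℝ) ^ (-r)) < 1 := by
      rw [← ENNReal.ofReal_one]
      exact ENNReal.ofReal_lt_ofReal_iff_of_nonneg (by positivity) |>.2
        (Real.rpow_lt_one_of_one_lt_of_neg one_lt_two (by linarith))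
    have hGne : (1 - ENNReal.ofReal ((2:ℝ) ^ (-r)))⁻¹ ≠ ⊤ := by
      rw [Ne, ENNReal.inv_eq_top, tsub_eq_zero_iff_le]
      exact not_le.2 hq1
    rw [lt_top_iff_ne_top]
    exact ENNReal.add_ne_top.2 ⟨ENNReal.ofReal_ne_top,
      ENNReal.mul_ne_top (ENNReal.mul_ne_top ENNReal.ofReal_ne_top hCne) hGne⟩
  · intro h
    set C : ℝ≥0∞ := ⨆ lam ∈ Set.Ioc (0 : ℝ) 1, ENNReal.ofReal (lam ^ r) *
        ∑' i : I, (if lam < |a i| then (1 : ℝ≥0∞) else 0) with hCdef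
    have hCne : C ≠ ⊤ := h.ne
    have hN : ∀ μ ∈ Set.Ioc (0:ℝ) 1,
        (∑' i : I, (if μ < |a i| then (1:ℝ≥0∞) else 0))
          ≤ ENNReal.ofReal (μ ^ (-r)) * C := by
      intro μ hμ
      have h1 : ENNReal.ofReal (μ ^ r) *
          (∑' i : I, (if μ < |a i| then (1:ℝ≥0∞) else 0)) ≤ C :=
        le_iSup₂ (f := fun lam (_ : lam ∈ Set.Ioc (0:ℝ) 1) => ENNReal.ofReal (lam ^ r) *
          ∑' i : I, (if lam < |a i| then (1:ℝ≥0∞) else 0)) μ hμ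
      have hone : ENNReal.ofReal (μ ^ (-r)) * ENNReal.ofReal (μ ^ r) = 1 := by
        rw [← ENNReal.ofReal_mul (Real.rpow_nonneg hμ.1.le _), ← Real.rpow_add hμ.1,
          show (-r) + r = 0 by ring, Real.rpow_zero, ENNReal.ofReal_one]
      calc (∑' i : I, (if μ < |a i| then (1:ℝ≥0∞) else 0))
          = ENNReal.ofReal (μ ^ (-r)) * (ENNReal.ofReal (μ ^ r) *
            (∑' i : I, (if μ < |a i| then (1:ℝ≥0∞) else 0))) := by
            rw [← mul_assoc, hone, one_mul]
      _ ≤ ENNReal.ofReal (μ ^ (-r)) * C := mul_le_mul_right h1 _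
    refine lt_of_le_of_lt
      (iSup₂_le fun lam hlam => backward_pointwise r hr0 hr2 a C hN hlam.1 hlam.2) ?_
    have hq1 : ENNReal.ofReal ((2:ℝ) ^ (r - 2)) < 1 := by
      rw [← ENNReal.ofReal_one]
      exact ENNReal.ofReal_lt_ofReal_iff_of_nonneg (by positivity) |>.2
        (Real.rpow_lt_one_of_one_lt_of_neg one_lt_two (by linarith))
    have hGne : (1 - ENNReal.ofReal ((2:ℝ) ^ (r - 2)))⁻¹ ≠ ⊤ := by
      rw [Ne, ENNReal.inv_eq_top, tsub_eq_zero_iff_le]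
      exact not_le.2 hq1
    rw [lt_top_iff_ne_top]
    exact ENNReal.mul_ne_top (ENNReal.mul_ne_top ENNReal.ofReal_ne_top hCne) hGne
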